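/- Let (a_k)_{k≥0} be a sequence of complex numbers with a_0 ≠ 0 and limsup_{k→∞} |a_k|^{1/k} = ∞. Set A_n = max_{1≤k≤n} |a_k|^{1/k} and p_n(z) = ∑_{k=0}^n a_k A_n^{-k} z^k. Suppose the gauge G of (a_k) satisfies G < 1. Then there exist γ ∈ (0, 1/2) and r > 1 such that liminf_{n→∞} (1/n)·#{ zeros w of p_n, counted with multiplicity, with |w| < r } ≤ 1 − γ. In particular the zero counting measures of (p_n) do not converge weakly to the uniform probability measure on the unit circle, i.e., (p_n) does not belong to the Szegö class. -/

import Mathlib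

open Filter Polynomial
open scoped Classical Real

namespace Stmt1Aux

lemma norm_mprod (m : Multiset ℂ) : ‖m.prod‖ = (m.map (fun w => ‖w‖)).prod := by
  induction m using Multiset.induction with
  | empty => simp
  | cons a m ih => rw [Multiset.prod_cons, norm_mul, ih, Multiset.map_cons, Multiset.prod_cons]

lemma sum_shift (R : ℝ) (M : ℕ) (s : Polynomial ℂ)
    (hs : ∀ k, M ≤ k + 1 → s.coeff k = 0) :
    ∑ k ∈ Finset.range M, R ^ (2 * k) * Complex.normSq ((Polynomial.X * s).coeff k)
      = R ^ 2 * ∑ k ∈ Finset.range M, R ^ (2 * k) * Complex.normSq (s.coeff k) := by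
  cases M with
  | zero => simp
  | succ M =>
    rw [Finset.sum_range_succ']
    rw [Finset.sum_range_succ]
    have h0 : (Polynomial.X * s).coeff 0 = 0 := by
      rw [Polynomial.mul_coeff_zero, Polynomial.coeff_X_zero, zero_mul]
    have hM : s.coeff M = 0 := hs M le_rfl
    rw [h0, hM]
    simp only [Complex.normSq_zero, mul_zero, add_zero]
    rw [Finset.mul_sum]
    refine Finset.sum_congr rfl fun i _ => ?_
    rw [Polynomial.coeff_X_mul]
    ring

lemma swap_step (R : ℝ) (hR : 0 < R) (M : ℕ) (w : ℂ) (s : Polynomial ℂ)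
    (hs : ∀ k, M ≤ k + 1 → s.coeff k = 0) :
    ∑ k ∈ Finset.range M, R ^ (2 * k) *
        Complex.normSq (((Polynomial.X - Polynomial.C w) * s).coeff k)
      = ∑ k ∈ Finset.range M, R ^ (2 * k) *
        Complex.normSq (((Polynomial.C ((starRingEnd ℂ) w / (R : ℂ)) * Polynomial.X
            - Polynomial.C (R : ℂ)) * s).coeff k) := by
  have hco1 : ∀ k, ((Polynomial.X - Polynomial.C w) * s).coeff k
      = (Polynomial.X * s).coeff k - w * s.coeff k := by
    intro k
    rw [sub_mul, Polynomial.coeff_sub, Polynomial.coeff_C_mul]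
  have hco2 : ∀ k, ((Polynomial.C ((starRingEnd ℂ) w / (R : ℂ)) * Polynomial.X
        - Polynomial.C (R : ℂ)) * s).coeff k
      = ((starRingEnd ℂ) w / (R : ℂ)) * (Polynomial.X * s).coeff k - (R : ℂ) * s.coeff k := by
    intro k
    rw [sub_mul, Polynomial.coeff_sub, mul_assoc, Polynomial.coeff_C_mul,
      Polynomial.coeff_C_mul]
  have hRne : (R : ℂ) ≠ 0 := by exact_mod_cast hR.ne'
  -- expand both sides
  have expand1 : ∀ k, Complex.normSq ((Polynomial.X * s).coeff k - w * s.coeff k)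
      = Complex.normSq ((Polynomial.X * s).coeff k)
        + Complex.normSq w * Complex.normSq (s.coeff k)
        - 2 * ((Polynomial.X * s).coeff k * (starRingEnd ℂ) (w * s.coeff k)).re := by
    intro k
    rw [Complex.normSq_sub, map_mul Complex.normSq]
  have expand2 : ∀ k, Complex.normSq (((starRingEnd ℂ) w / (R : ℂ)) * (Polynomial.X * s).coeff k
        - (R : ℂ) * s.coeff k)
      = (Complex.normSq w / R ^ 2) * Complex.normSq ((Polynomial.X * s).coeff k)
        + R ^ 2 * Complex.normSq (s.coeff k)
        - 2 * ((Polynomial.X * s).coeff k * (starRingEnd ℂ) (w * s.coeff k)).re := by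
    intro k
    rw [Complex.normSq_sub, map_mul Complex.normSq, map_mul Complex.normSq]
    have h1 : Complex.normSq ((starRingEnd ℂ) w / (R : ℂ)) = Complex.normSq w / R ^ 2 := by
      rw [map_div₀ Complex.normSq, Complex.normSq_conj]
      norm_cast
      rw [Complex.normSq_ofReal]
      ring_nf
    have h2 : Complex.normSq ((R : ℂ)) = R ^ 2 := by
      rw [Complex.normSq_ofReal]; ring
    rw [h1, h2]
    have h3 : (((starRingEnd ℂ) w / (R : ℂ)) * (Polynomial.X * s).coeff k
          * (starRingEnd ℂ) ((R : ℂ) * s.coeff k)).re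
        = ((Polynomial.X * s).coeff k * (starRingEnd ℂ) (w * s.coeff k)).re := by
      have : ((starRingEnd ℂ) w / (R : ℂ)) * (Polynomial.X * s).coeff k
          * (starRingEnd ℂ) ((R : ℂ) * s.coeff k)
          = (Polynomial.X * s).coeff k * (starRingEnd ℂ) (w * s.coeff k) := by
        rw [map_mul, map_mul, Complex.conj_ofReal]
        field_simp
      rw [this]
    rw [h3]
  have hshift := sum_shift R M s hs
  have hsum1 : ∑ k ∈ Finset.range M, R ^ (2 * k) *
        Complex.normSq (((Polynomial.X - Polynomial.C w) * s).coeff k)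
      = (∑ k ∈ Finset.range M, R ^ (2 * k) * Complex.normSq ((Polynomial.X * s).coeff k))
          + Complex.normSq w * (∑ k ∈ Finset.range M, R ^ (2 * k) * Complex.normSq (s.coeff k))
          - 2 * ∑ k ∈ Finset.range M, (R ^ (2 * k) *
              ((Polynomial.X * s).coeff k * (starRingEnd ℂ) (w * s.coeff k)).re) := by
    rw [Finset.mul_sum, Finset.mul_sum, ← Finset.sum_add_distrib, ← Finset.sum_sub_distrib]
    refine Finset.sum_congr rfl fun k _ => ?_
    rw [hco1, expand1]; ring
  have hsum2 : ∑ k ∈ Finset.range M, R ^ (2 * k) *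
        Complex.normSq (((Polynomial.C ((starRingEnd ℂ) w / (R : ℂ)) * Polynomial.X
            - Polynomial.C (R : ℂ)) * s).coeff k)
      = (Complex.normSq w / R ^ 2) *
            (∑ k ∈ Finset.range M, R ^ (2 * k) * Complex.normSq ((Polynomial.X * s).coeff k))
          + R ^ 2 * (∑ k ∈ Finset.range M, R ^ (2 * k) * Complex.normSq (s.coeff k))
          - 2 * ∑ k ∈ Finset.range M, (R ^ (2 * k) *
              ((Polynomial.X * s).coeff k * (starRingEnd ℂ) (w * s.coeff k)).re) := by
    rw [Finset.mul_sum, Finset.mul_sum, Finset.mul_sum, ← Finset.sum_add_distrib,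
      ← Finset.sum_sub_distrib]
    refine Finset.sum_congr rfl fun k _ => ?_
    rw [hco2, expand2]; ring
  rw [hsum1, hsum2, hshift]
  have hR2 : R ^ 2 ≠ 0 := by positivity
  field_simp
  ring

lemma deg_prod_lin (V : Multiset ℂ) (f : ℂ → Polynomial ℂ) (hf : ∀ w, (f w).natDegree ≤ 1) :
    ((V.map f).prod).natDegree ≤ V.card := by
  refine (Polynomial.natDegree_multiset_prod_le _).trans ?_
  rw [Multiset.map_map]
  calc (V.map fun w => (f w).natDegree).sum ≤ (V.map fun _ => 1).sum := by
        apply Multiset.sum_map_le_sum_map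
        intro w _; exact hf w
    _ = V.card := by simp

lemma swapAll (R : ℝ) (hR : 0 < R) (M : ℕ) (V : Multiset ℂ) :
    ∀ q : Polynomial ℂ, q.natDegree + V.card + 1 ≤ M →
    ∑ k ∈ Finset.range M, R ^ (2 * k) *
        Complex.normSq ((q * (V.map fun w => Polynomial.X - Polynomial.C w).prod).coeff k)
      = ∑ k ∈ Finset.range M, R ^ (2 * k) *
        Complex.normSq ((q * (V.map fun w => Polynomial.C ((starRingEnd ℂ) w / (R : ℂ)) *
            Polynomial.X - Polynomial.C (R : ℂ)).prod).coeff k) := by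
  induction V using Multiset.induction with
  | empty => intro q _; simp
  | cons w V ih =>
    intro q hq
    have hdegV : ((V.map fun w => Polynomial.X - Polynomial.C w).prod).natDegree ≤ V.card :=
      deg_prod_lin V _ fun w => by
        simpa using (Polynomial.natDegree_X_sub_C_le (a := w))
    have hcard : (w ::ₘ V).card = V.card + 1 := by simp
    rw [hcard] at hq
    set g : Polynomial ℂ := Polynomial.C ((starRingEnd ℂ) w / (R : ℂ)) * Polynomial.X
        - Polynomial.C (R : ℂ) with hg
    have hdegg : g.natDegree ≤ 1 := by
      rw [hg, sub_eq_add_neg, ← Polynomial.C_neg]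
      exact Polynomial.natDegree_linear_le
    set s : Polynomial ℂ := q * (V.map fun w => Polynomial.X - Polynomial.C w).prod with hs
    have hdegs : s.natDegree ≤ q.natDegree + V.card :=
      (Polynomial.natDegree_mul_le).trans (add_le_add_right hdegV _)
    have hvanish : ∀ k, M ≤ k + 1 → s.coeff k = 0 := by
      intro k hk
      apply Polynomial.coeff_eq_zero_of_natDegree_lt
      omega
    have e1 : q * ((w ::ₘ V).map fun w => Polynomial.X - Polynomial.C w).prod
        = (Polynomial.X - Polynomial.C w) * s := by
      rw [hs, Multiset.map_cons, Multiset.prod_cons]; ring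
    have e2 : (g * q) * (V.map fun w => Polynomial.X - Polynomial.C w).prod = g * s := by
      rw [hs]; ring
    have e3 : q * ((w ::ₘ V).map fun w => Polynomial.C ((starRingEnd ℂ) w / (R : ℂ)) *
            Polynomial.X - Polynomial.C (R : ℂ)).prod
        = (g * q) * (V.map fun w => Polynomial.C ((starRingEnd ℂ) w / (R : ℂ)) *
            Polynomial.X - Polynomial.C (R : ℂ)).prod := by
      rw [Multiset.map_cons, Multiset.prod_cons, ← hg]; ring
    rw [e1, e3, swap_step R hR M w s hvanish, ← e2]
    apply ih
    have := Polynomial.natDegree_mul_le (p := g) (q := q)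
    omega

lemma landau (R : ℝ) (hR : 0 < R) (c : ℂ) (hc : c ≠ 0) (W : Multiset ℂ) (M : ℕ)
    (hM : W.card + 1 ≤ M) :
    (‖c‖ * (W.map fun w => max R (‖w‖)).prod) ^ 2
      ≤ ∑ k ∈ Finset.range M, R ^ (2 * k) *
          Complex.normSq ((Polynomial.C c *
            (W.map fun w => Polynomial.X - Polynomial.C w).prod).coeff k) := by
  classical
  set U : Multiset ℂ := W.filter (fun w => ‖w‖ ≤ R) with hU
  set V : Multiset ℂ := W.filter (fun w => ¬ ‖w‖ ≤ R) with hV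
  have hUV : U + V = W := Multiset.filter_add_not _ W
  have hcardUV : U.card + V.card = W.card := by rw [← Multiset.card_add, hUV]
  have hq : (Polynomial.C c * (U.map fun w => Polynomial.X - Polynomial.C w).prod).natDegree
      + V.card + 1 ≤ M := by
    have h1 : (Polynomial.C c * (U.map fun w => Polynomial.X - Polynomial.C w).prod).natDegree
        ≤ U.card := by
      refine (Polynomial.natDegree_mul_le).trans ?_
      rw [Polynomial.natDegree_C]
      simpa using deg_prod_lin U _ fun w => Polynomial.natDegree_X_sub_C_le (a := w)
    omega
  have key := swapAll R hR M V (Polynomial.C c * (U.map fun w => Polynomial.X - Polynomial.C w).prod) hq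
  have eW : Polynomial.C c * (U.map fun w => Polynomial.X - Polynomial.C w).prod *
        (V.map fun w => Polynomial.X - Polynomial.C w).prod
      = Polynomial.C c * (W.map fun w => Polynomial.X - Polynomial.C w).prod := by
    rw [← hUV, Multiset.map_add, Multiset.prod_add]; ring
  rw [eW] at key
  rw [key]
  -- now bound below by the top coefficient term
  set pt : Polynomial ℂ := Polynomial.C c * (U.map fun w => Polynomial.X - Polynomial.C w).prod *
      (V.map fun w => Polynomial.C ((starRingEnd ℂ) w / (R : ℂ)) *
        Polynomial.X - Polynomial.C (R : ℂ)).prod with hpt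
  have hRne : (R : ℂ) ≠ 0 := by exact_mod_cast hR.ne'
  have hVne : ∀ w ∈ V, ((starRingEnd ℂ) w / (R : ℂ)) ≠ 0 := by
    intro w hw
    have : ¬ ‖w‖ ≤ R := (Multiset.mem_filter.mp hw).2
    have hw0 : w ≠ 0 := by
      intro h; apply this; rw [h]; simpa using hR.le
    exact div_ne_zero (by simpa using hw0) hRne
  -- degree and leading coefficient of pt
  have hdeg2 : ∀ w ∈ V, (Polynomial.C ((starRingEnd ℂ) w / (R : ℂ)) * Polynomial.X
      - Polynomial.C (R : ℂ)).natDegree = 1 := by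
    intro w hw
    rw [sub_eq_add_neg, ← Polynomial.C_neg]
    exact Polynomial.natDegree_linear (hVne w hw)
  have hdegU : ((U.map fun w => Polynomial.X - Polynomial.C w).prod).natDegree = U.card := by
    rw [Polynomial.natDegree_multiset_prod]
    · rw [Multiset.map_map]
      have : (U.map (Polynomial.natDegree ∘ fun w : ℂ => Polynomial.X - Polynomial.C w))
          = U.map fun _ => (1:ℕ) :=
        Multiset.map_congr rfl fun w _ => by simpa using Polynomial.natDegree_X_sub_C (a := w)
      rw [this]; simp
    · intro h
      rcases Multiset.mem_map.mp h with ⟨w, _, hw⟩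
      exact (Polynomial.X_sub_C_ne_zero w) hw
  have hdegV : ((V.map fun w => Polynomial.C ((starRingEnd ℂ) w / (R : ℂ)) *
        Polynomial.X - Polynomial.C (R : ℂ)).prod).natDegree = V.card := by
    rw [Polynomial.natDegree_multiset_prod]
    · rw [Multiset.map_map]
      have : (V.map (Polynomial.natDegree ∘ fun w : ℂ => Polynomial.C ((starRingEnd ℂ) w / (R : ℂ))
          * Polynomial.X - Polynomial.C (R : ℂ))) = V.map fun _ => (1:ℕ) :=
        Multiset.map_congr rfl fun w hw => by simpa using hdeg2 w hw
      rw [this]; simp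
    · intro h
      rcases Multiset.mem_map.mp h with ⟨w, hw, hww⟩
      have h1 := hdeg2 w hw
      rw [hww] at h1
      simp at h1
  have hUprod_ne : ((U.map fun w => Polynomial.X - Polynomial.C w).prod) ≠ 0 := by
    apply Multiset.prod_ne_zero
    intro h
    rcases Multiset.mem_map.mp h with ⟨w, _, hw⟩
    exact (Polynomial.X_sub_C_ne_zero w) hw
  have hVprod_ne : ((V.map fun w => Polynomial.C ((starRingEnd ℂ) w / (R : ℂ)) *
        Polynomial.X - Polynomial.C (R : ℂ)).prod) ≠ 0 := by
    apply Multiset.prod_ne_zero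
    intro h
    rcases Multiset.mem_map.mp h with ⟨w, hw, hww⟩
    have h1 := hdeg2 w hw
    rw [hww] at h1
    simp at h1
  have hdegpt : pt.natDegree = W.card := by
    rw [hpt, Polynomial.natDegree_mul (mul_ne_zero (Polynomial.C_ne_zero.mpr hc) hUprod_ne)
      hVprod_ne, Polynomial.natDegree_mul (Polynomial.C_ne_zero.mpr hc) hUprod_ne,
      Polynomial.natDegree_C, hdegU, hdegV]
    omega
  have hleadpt : pt.leadingCoeff = c * (V.map fun w => (starRingEnd ℂ) w / (R : ℂ)).prod := by
    rw [hpt, Polynomial.leadingCoeff_mul, Polynomial.leadingCoeff_mul,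
      Polynomial.leadingCoeff_C, Polynomial.leadingCoeff_multiset_prod,
      Polynomial.leadingCoeff_multiset_prod, Multiset.map_map, Multiset.map_map]
    rw [Multiset.map_congr (rfl : U = U) (fun w _ => by
      show ((Polynomial.X - Polynomial.C w).leadingCoeff) = (fun _ => (1:ℂ)) w
      exact (Polynomial.monic_X_sub_C w).leadingCoeff)]
    rw [Multiset.map_congr (rfl : V = V) (fun w hw => by
      show ((Polynomial.C ((starRingEnd ℂ) w / (R : ℂ)) * Polynomial.X
          - Polynomial.C (R : ℂ)).leadingCoeff) = (starRingEnd ℂ) w / (R : ℂ)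
      rw [sub_eq_add_neg, ← Polynomial.C_neg]
      exact Polynomial.leadingCoeff_linear (hVne w hw))]
    simp
  -- the single big term
  have hterm : R ^ (2 * W.card) * Complex.normSq (pt.coeff W.card)
      ≤ ∑ k ∈ Finset.range M, R ^ (2 * k) * Complex.normSq (pt.coeff k) := by
    refine Finset.single_le_sum (f := fun k => R ^ (2 * k) * Complex.normSq (pt.coeff k))
      (fun k _ => mul_nonneg (by positivity) (Complex.normSq_nonneg _)) ?_
    rw [Finset.mem_range]; omega
  refine le_trans ?_ hterm
  have hcoeffpt : pt.coeff W.card = pt.leadingCoeff := by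
    rw [Polynomial.leadingCoeff, hdegpt]
  rw [hcoeffpt, hleadpt, ← Complex.sq_norm, norm_mul,
    Stmt1Aux.norm_mprod, Multiset.map_map]
  rw [Multiset.map_congr (rfl : V = V) (fun w _ => by
    show ‖(starRingEnd ℂ) w / (R : ℂ)‖ = ‖w‖ * R⁻¹
    rw [norm_div, Complex.norm_conj, Complex.norm_real, Real.norm_eq_abs, abs_of_pos hR, div_eq_mul_inv])]
  rw [Multiset.prod_map_mul]
  rw [← hUV, Multiset.map_add, Multiset.prod_add]
  rw [Multiset.map_congr (rfl : U = U) (fun w hw => by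
    show max R (‖w‖) = R
    exact max_eq_left (Multiset.mem_filter.mp hw).2)]
  rw [Multiset.map_congr (rfl : V = V) (fun w hw => by
    show max R (‖w‖) = ‖w‖
    exact max_eq_right (le_of_lt (lt_of_not_ge (Multiset.mem_filter.mp hw).2)))]
  rw [Multiset.map_const', Multiset.prod_replicate, Multiset.map_const', Multiset.prod_replicate]
  rw [Multiset.card_add]
  have hRne' : R ≠ 0 := hR.ne'
  rw [inv_pow]
  apply le_of_eq
  field_simp
  ring

lemma zeros_bound (p : Polynomial ℂ) (h0 : p.coeff 0 ≠ 0) (R r : ℝ) (hr : 1 < r) (hrR : r < R)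
    (M : ℕ) (hM : p.natDegree + 1 ≤ M) :
    ‖p.coeff 0‖ ^ 2 *
        (R / r) ^ (2 * (p.roots.filter fun w => ‖w‖ < r).card)
      ≤ ∑ k ∈ Finset.range M, R ^ (2 * k) * Complex.normSq (p.coeff k) := by
  classical
  have hp : p ≠ 0 := fun h => h0 (by simp [h])
  have hc : p.leadingCoeff ≠ 0 := Polynomial.leadingCoeff_ne_zero.mpr hp
  have hsplit : Polynomial.Splits p := IsAlgClosed.splits p
  have hfact := hsplit.eq_prod_roots
  have hcard : p.roots.card = p.natDegree := (Polynomial.splits_iff_card_roots).mp hsplit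
  have hR : (0:ℝ) < R := lt_trans (lt_trans one_pos hr) hrR
  have key := landau R hR p.leadingCoeff hc p.roots M (by rw [hcard]; exact hM)
  rw [← hfact] at key
  refine le_trans ?_ key
  -- roots are nonzero
  have hrne : ∀ w ∈ p.roots, w ≠ 0 := by
    intro w hw h
    have := Polynomial.isRoot_of_mem_roots hw
    rw [h] at this
    exact h0 (by rwa [Polynomial.coeff_zero_eq_eval_zero])
  -- |p.coeff 0| = |c| * ∏ |w|
  have habs0 : ‖p.coeff 0‖
      = ‖p.leadingCoeff‖ * (p.roots.map (fun w => ‖w‖)).prod := by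
    conv_lhs => rw [Polynomial.coeff_zero_eq_eval_zero, hfact]
    rw [Polynomial.eval_mul, Polynomial.eval_C, Polynomial.eval_multiset_prod,
      Multiset.map_map, norm_mul, Stmt1Aux.norm_mprod, Multiset.map_map]
    congr 2
    refine Multiset.map_congr rfl fun w _ => ?_
    show ‖Polynomial.eval 0 (Polynomial.X - Polynomial.C w)‖ = ‖w‖
    simp
  -- product inequality
  set Ws : Multiset ℂ := p.roots.filter (fun w => ‖w‖ < r) with hWs
  set Wb : Multiset ℂ := p.roots.filter (fun w => ¬ ‖w‖ < r) with hWb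
  have hWsum : Ws + Wb = p.roots := Multiset.filter_add_not _ _
  set N : ℕ := Ws.card with hN
  have hprod : (R / r) ^ N * (p.roots.map (fun w => ‖w‖)).prod
      ≤ (p.roots.map fun w => max R (‖w‖)).prod := by
    rw [← hWsum, Multiset.map_add, Multiset.prod_add, Multiset.map_add, Multiset.prod_add]
    have h1 : (Ws.map (fun w => ‖w‖)).prod ≤ r ^ N := by
      calc (Ws.map (fun w => ‖w‖)).prod ≤ (Ws.map fun _ => r).prod := by
            apply Multiset.prod_map_le_prod_map₀
            · intro w _; exact norm_nonneg w
            · intro w hw; exact le_of_lt (Multiset.mem_filter.mp hw).2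
        _ = r ^ N := by rw [Multiset.map_const', Multiset.prod_replicate]
    have h2 : (Wb.map (fun w => ‖w‖)).prod ≤ (Wb.map fun w => max R (‖w‖)).prod := by
      apply Multiset.prod_map_le_prod_map₀
      · intro w _; exact norm_nonneg w
      · intro w _; exact le_max_right _ _
    have h3 : (Ws.map fun w => max R (‖w‖)).prod = R ^ N := by
      rw [Multiset.map_congr rfl (fun w hw => max_eq_left
          (le_of_lt (lt_trans (Multiset.mem_filter.mp hw).2 hrR)))]
      rw [Multiset.map_const', Multiset.prod_replicate]
    rw [h3]
    have hbnn : (0:ℝ) ≤ (Wb.map (fun w => ‖w‖)).prod := by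
      apply Multiset.prod_nonneg
      intro x hx
      rcases Multiset.mem_map.mp hx with ⟨w, _, hw⟩
      exact hw ▸ norm_nonneg w
    have t1 : (Ws.map (fun w => ‖w‖)).prod * (Wb.map (fun w => ‖w‖)).prod
        ≤ r ^ N * (Wb.map fun w => max R (‖w‖)).prod :=
      mul_le_mul h1 h2 hbnn (by positivity)
    have t2 := mul_le_mul_of_nonneg_left t1 (show (0:ℝ) ≤ (R/r)^N by positivity)
    refine t2.trans (le_of_eq ?_)
    rw [div_pow, ← mul_assoc, div_mul_cancel₀]
    positivity
  -- combine
  have hstep : ‖p.coeff 0‖ * (R / r) ^ N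
      ≤ ‖p.leadingCoeff‖ * (p.roots.map fun w => max R (‖w‖)).prod := by
    calc ‖p.coeff 0‖ * (R / r) ^ N
        = ‖p.leadingCoeff‖ * ((R / r) ^ N * (p.roots.map (fun w => ‖w‖)).prod) := by
          rw [habs0]; ring
      _ ≤ ‖p.leadingCoeff‖ * (p.roots.map fun w => max R (‖w‖)).prod :=
          mul_le_mul_of_nonneg_left hprod (norm_nonneg _)
  calc ‖p.coeff 0‖ ^ 2 * (R / r) ^ (2 * N)
      = (‖p.coeff 0‖ * (R / r) ^ N) ^ 2 := by
        rw [mul_pow, ← pow_mul, mul_comm N 2]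
    _ ≤ (‖p.leadingCoeff‖ * (p.roots.map fun w => max R (‖w‖)).prod) ^ 2 := by
        apply pow_le_pow_left₀ (mul_nonneg (norm_nonneg _) (by positivity)) hstep

lemma coeffP (a : ℕ → ℂ) (A : ℕ → ℝ) (P : ℕ → Polynomial ℂ)
    (hP : ∀ n : ℕ, P n = ∑ k ∈ Finset.range (n + 1),
      Polynomial.C (a k * ((A n : ℂ))⁻¹ ^ k) * Polynomial.X ^ k)
    (n k : ℕ) (hk : k ≤ n) : (P n).coeff k = a k * ((A n : ℂ))⁻¹ ^ k := by
  rw [hP n, Polynomial.finset_sum_coeff]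
  rw [Finset.sum_eq_single k]
  · rw [Polynomial.coeff_C_mul, Polynomial.coeff_X_pow, if_pos rfl, mul_one]
  · intro j _ hj
    rw [Polynomial.coeff_C_mul, Polynomial.coeff_X_pow, if_neg (fun h => hj h.symm), mul_zero]
  · intro hnot
    exact absurd (Finset.mem_range.mpr (by omega)) hnot

lemma degP (a : ℕ → ℂ) (A : ℕ → ℝ) (P : ℕ → Polynomial ℂ)
    (hP : ∀ n : ℕ, P n = ∑ k ∈ Finset.range (n + 1),
      Polynomial.C (a k * ((A n : ℂ))⁻¹ ^ k) * Polynomial.X ^ k)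
    (n : ℕ) : (P n).natDegree ≤ n := by
  rw [Polynomial.natDegree_le_iff_coeff_eq_zero]
  intro m hm
  rw [hP n, Polynomial.finset_sum_coeff]
  apply Finset.sum_eq_zero
  intro j hj
  rw [Finset.mem_range] at hj
  rw [Polynomial.coeff_C_mul, Polynomial.coeff_X_pow, if_neg (by omega), mul_zero]

end Stmt1Aux

open Stmt1Aux

set_option maxHeartbeats 2000000 in
/-- "only if" direction of the main theorem. If the power series
`∑ a_k z^k` has null radius of convergence, `a_0 ≠ 0`, and its gauge `G < 1`, then
there exist `γ ∈ (0, 1/2)` and `r > 1` such that the liminf of the fraction of zeros of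
the normalized sections `p_n` lying in `{|w| < r}` is at most `1 - γ`; in particular the
zero counting measures of `(p_n)` do not converge weakly to the uniform probability
measure on the unit circle. -/
theorem stmt_1 (a : ℕ → ℂ) (A : ℕ → ℝ) (B : ℝ → ℕ → ℝ) (L : ℝ → ℝ) (G : ℝ)
    (P : ℕ → Polynomial ℂ)
    (ha0 : a 0 ≠ 0)
    (hrad : Filter.limsup
      (fun k : ℕ => ((‖a k‖ ^ ((k : ℝ)⁻¹) : ℝ) : EReal)) Filter.atTop = ⊤)
    (hA : ∀ n : ℕ, 1 ≤ n → IsGreatest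
      {x : ℝ | ∃ k : ℕ, 1 ≤ k ∧ k ≤ n ∧ x = ‖a k‖ ^ ((k : ℝ)⁻¹)} (A n))
    (hB : ∀ γ ∈ Set.Ioo (0 : ℝ) 1, ∀ n : ℕ, 1 ≤ n → IsGreatest
      {x : ℝ | ∃ k : ℕ, (1 - γ) * (n : ℝ) ≤ (k : ℝ) ∧ k ≤ n ∧
        x = ‖a k‖ ^ ((k : ℝ)⁻¹)} (B γ n))
    (hL : ∀ γ ∈ Set.Ioo (0 : ℝ) 1,
      ((L γ : ℝ) : EReal) = Filter.liminf (fun n : ℕ => ((B γ n / A n : ℝ) : EReal))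
        Filter.atTop)
    (hG : Filter.Tendsto L (nhdsWithin 0 (Set.Ioi (0 : ℝ))) (nhds G))
    (hGlt : G < 1)
    (hP : ∀ n : ℕ, P n = ∑ k ∈ Finset.range (n + 1),
      Polynomial.C (a k * ((A n : ℂ))⁻¹ ^ k) * Polynomial.X ^ k) :
    (∃ γ ∈ Set.Ioo (0 : ℝ) (1 / 2), ∃ r : ℝ, 1 < r ∧
      Filter.liminf (fun n : ℕ =>
          (((1 / (n : ℝ)) *
            (((P n).roots.filter fun w => ‖w‖ < r).card : ℝ) : ℝ) : EReal))
        Filter.atTop ≤ ((1 - γ : ℝ) : EReal)) ∧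
    ¬ (∀ h : ℂ → ℝ, Continuous h → HasCompactSupport h →
      Filter.Tendsto (fun n : ℕ => (1 / (n : ℝ)) * ((P n).roots.map h).sum)
        Filter.atTop
        (nhds ((1 / (2 * Real.pi)) *
          ∫ θ in (0 : ℝ)..(2 * Real.pi), h (Complex.exp (θ * Complex.I))))) := by
  have main : ∃ γ ∈ Set.Ioo (0 : ℝ) (1 / 2), ∃ r : ℝ, 1 < r ∧
      Filter.liminf (fun n : ℕ =>
          (((1 / (n : ℝ)) *
            (((P n).roots.filter fun w => ‖w‖ < r).card : ℝ) : ℝ) : EReal))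
        Filter.atTop ≤ ((1 - γ : ℝ) : EReal) := by
    -- the threshold c
    set c : ℝ := max (1/2) ((1+G)/2) with hcdef
    have hc0 : 0 < c := lt_of_lt_of_le one_half_pos (le_max_left _ _)
    have hc1 : c < 1 := max_lt (by norm_num) (by linarith)
    have hGc : G < c := lt_of_lt_of_le (by linarith) (le_max_right _ _)
    -- choose γ0
    have hev : ∀ᶠ γ in nhdsWithin 0 (Set.Ioi (0:ℝ)), L γ < c := hG.eventually_lt_const hGc
    have hIoo : Set.Ioo (0:ℝ) 1 ∈ nhdsWithin 0 (Set.Ioi (0:ℝ)) :=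
      Ioo_mem_nhdsGT_of_mem (by constructor <;> norm_num)
    obtain ⟨γ0, hγL, hγ0pos, hγ0lt1⟩ :=
      (hev.and (eventually_of_mem hIoo (fun x hx => hx))).exists
    -- R and r
    set R : ℝ := c⁻¹ with hRdef
    have hRpos : (0:ℝ) < R := by positivity
    have hR1 : 1 < R := (one_lt_inv₀ hc0).mpr hc1
    have hcR : c * R = 1 := by rw [hRdef, mul_inv_cancel₀ hc0.ne']
    set r : ℝ := R ^ (γ0/2 : ℝ) with hrdef
    have hr1 : 1 < r := by
      rw [hrdef]
      exact Real.one_lt_rpow_iff_of_pos hRpos |>.mpr (Or.inl ⟨hR1, by positivity⟩)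
    have hrpos : (0:ℝ) < r := lt_trans one_pos hr1
    have hrR : r < R := by
      conv_rhs => rw [← Real.rpow_one R]
      rw [hrdef]
      exact (Real.rpow_lt_rpow_left_iff hR1).mpr (by linarith)
    -- frequently B/A < c
    have hlim := hL γ0 ⟨hγ0pos, hγ0lt1⟩
    have hfr : ∃ᶠ n in atTop, B γ0 n / A n < c := by
      have h1 : Filter.liminf (fun n : ℕ => ((B γ0 n / A n : ℝ) : EReal)) atTop
          < ((c:ℝ) : EReal) := by
        rw [← hlim]; exact_mod_cast hγL
      have h2 := Filter.frequently_lt_of_liminf_lt (by isBoundedDefault) h1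
      exact h2.mono (fun n hn => by exact_mod_cast hn)
    -- a coefficient with abs > 1
    obtain ⟨k1, hk11, hk1big⟩ : ∃ k, 1 ≤ k ∧ 1 < ‖a k‖ ^ ((k:ℝ)⁻¹) := by
      by_contra hcon
      push_neg at hcon
      have hle : Filter.limsup
          (fun k : ℕ => ((‖a k‖ ^ ((k:ℝ)⁻¹) : ℝ) : EReal)) atTop
          ≤ (((1:ℝ)) : EReal) := by
        apply Filter.limsup_le_of_le (by isBoundedDefault)
        filter_upwards [Filter.eventually_ge_atTop 1] with k hk
        exact_mod_cast hcon k hk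
      rw [hrad] at hle
      exact (not_le.mpr (EReal.coe_lt_top 1)) hle
    -- constants
    set a0 : ℝ := ‖a 0‖ with ha0def
    have ha0pos : 0 < a0 := norm_pos_iff.mpr ha0
    set C0 : ℝ := max 1 a0 with hC0def
    have hC01 : 1 ≤ C0 := le_max_left _ _
    have hC0a : a0 ≤ C0 := le_max_right _ _
    -- eventual conditions
    have hev8 : ∀ᶠ n : ℕ in atTop, 8 / γ0^2 ≤ (n:ℝ) :=
      (tendsto_natCast_atTop_atTop (R := ℝ)).eventually_ge_atTop _
    have hevgeom : ∀ᶠ n : ℕ in atTop, ((n:ℝ)+1) * C0^2 < a0^2 * r^n := by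
      have t1 : Filter.Tendsto (fun n : ℕ => ((n:ℝ))/r^n) atTop (nhds 0) := by
        simpa using tendsto_pow_const_div_const_pow_of_one_lt 1 hr1
      have t0 : Filter.Tendsto (fun n : ℕ => (1:ℝ)/r^n) atTop (nhds 0) := by
        simpa using tendsto_pow_const_div_const_pow_of_one_lt 0 hr1
      have t2 : Filter.Tendsto (fun n : ℕ => (((n:ℝ)+1) * C0^2)/r^n) atTop (nhds 0) := by
        have t3 := (t1.add t0).mul_const (C0^2)
        rw [add_zero, zero_mul] at t3
        have efun : (fun n : ℕ => (((n:ℝ)+1) * C0^2)/r^n)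
            = fun n : ℕ => ((n:ℝ)/r^n + 1/r^n) * C0^2 := by
          funext n
          field_simp
        rw [efun]
        exact t3
      have t4 := t2.eventually_lt_const (show (0:ℝ) < a0^2 by positivity)
      filter_upwards [t4] with n hn
      rw [div_lt_iff₀ (by positivity)] at hn
      linarith
    have hevk1 : ∀ᶠ n : ℕ in atTop, k1 ≤ n := Filter.eventually_ge_atTop k1
    have hgood := hfr.and_eventually ((hevk1.and hev8).and hevgeom)
    -- frequent bound on the zero fraction
    have hfreqle : ∃ᶠ n : ℕ in atTop, ((1 / (n : ℝ)) *
        (((P n).roots.filter fun w => ‖w‖ < r).card : ℝ)) ≤ 1 - γ0/4 := by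
      refine hgood.mono ?_
      rintro n ⟨hBA, ⟨hk1n, h8n⟩, hgeo⟩
      have hn1 : 1 ≤ n := le_trans hk11 hk1n
      have hnpos : (0:ℝ) < n := by exact_mod_cast hn1
      have hApos : 1 < A n :=
        lt_of_lt_of_le hk1big ((hA n hn1).2 ⟨k1, hk11, hk1n, rfl⟩)
      have hA0 : 0 < A n := lt_trans one_pos hApos
      have hBlt : B γ0 n < c * A n := (div_lt_iff₀ hA0).mp hBA
      have hcoeff := coeffP a A P hP n
      have h00 : (P n).coeff 0 = a 0 := by rw [hcoeff 0 (by omega)]; simp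
      have hdeg : (P n).natDegree ≤ n := degP a A P hP n
      -- abs of coefficients
      have habsco : ∀ k, 1 ≤ k → k ≤ n → ‖(P n).coeff k‖
          = (‖a k‖ ^ ((k:ℝ)⁻¹) / A n) ^ k := by
        intro k h1k hkn
        have hak : ‖a k‖ = (‖a k‖ ^ ((k:ℝ)⁻¹)) ^ k := by
          rw [← Real.rpow_natCast (‖a k‖ ^ ((k:ℝ)⁻¹)) k,
            ← Real.rpow_mul (norm_nonneg _),
            inv_mul_cancel₀ (by exact_mod_cast (by omega : k ≠ 0)), Real.rpow_one]
        rw [hcoeff k hkn, norm_mul, norm_pow, norm_inv, Complex.norm_real, Real.norm_eq_abs, abs_of_pos hA0,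
          div_pow, ← hak, inv_pow, div_eq_mul_inv]
      have hb1 : ∀ k, 1 ≤ k → k ≤ n → ‖(P n).coeff k‖ ≤ 1 := by
        intro k h1 h2
        rw [habsco k h1 h2]
        apply pow_le_one₀ (by positivity)
        rw [div_le_one hA0]
        exact (hA n hn1).2 ⟨k, h1, h2, rfl⟩
      have hb2 : ∀ k : ℕ, (1 - γ0) * (n:ℝ) ≤ (k:ℝ) → k ≤ n →
          ‖(P n).coeff k‖ ≤ c ^ k := by
        intro k hk1 hk2
        have h1k : 1 ≤ k := by
          rcases Nat.eq_zero_or_pos k with h | h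
          · exfalso; rw [h] at hk1; push_cast at hk1; nlinarith
          · exact h
        rw [habsco k h1k hk2]
        apply pow_le_pow_left₀ (by positivity)
        rw [div_le_iff₀ hA0]
        have hαB : ‖a k‖ ^ ((k:ℝ)⁻¹) ≤ B γ0 n :=
          (hB γ0 ⟨hγ0pos, hγ0lt1⟩ n hn1).2 ⟨k, hk1, hk2, rfl⟩
        linarith
      -- apply zeros_bound
      set N : ℕ := ((P n).roots.filter fun w => ‖w‖ < r).card with hNdef
      have h0ne : (P n).coeff 0 ≠ 0 := by rw [h00]; exact ha0
      have hzb := zeros_bound (P n) h0ne R r hr1 hrR (n+1) (by omega)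
      rw [h00] at hzb
      -- the sum bound
      set m : ℕ := ⌈(1-γ0) * (n:ℝ)⌉₊ with hmdef
      have hmle : (m:ℝ) ≤ (1-γ0)*(n:ℝ) + 1 :=
        le_of_lt (Nat.ceil_lt_add_one (by nlinarith))
      have hsum : ∑ k ∈ Finset.range (n+1), R^(2*k) * Complex.normSq ((P n).coeff k)
          ≤ ((n:ℝ)+1) * (C0^2 * R^(2*m)) := by
        have hterm : ∀ k ∈ Finset.range (n+1),
            R^(2*k) * Complex.normSq ((P n).coeff k) ≤ C0^2 * R^(2*m) := by
          intro k hk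
          rw [Finset.mem_range, Nat.lt_succ_iff] at hk
          rw [← Complex.sq_norm]
          have hRm1 : (1:ℝ) ≤ R^(2*m) := one_le_pow₀ hR1.le
          rcases Nat.eq_zero_or_pos k with h0 | hpos
          · subst h0
            simp only [Nat.mul_zero, pow_zero, one_mul, h00]
            calc a0^2 ≤ C0^2 := by nlinarith
              _ ≤ C0^2 * R^(2*m) := le_mul_of_one_le_right (by positivity) hRm1
          · rcases lt_or_ge k m with hkm | hmk
            · have hck := hb1 k hpos hk
              have e1 : R^(2*k) ≤ R^(2*m) := pow_le_pow_right₀ hR1.le (by omega)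
              have e2 : ‖(P n).coeff k‖^2 ≤ 1 := by
                nlinarith [norm_nonneg ((P n).coeff k)]
              have e6 : R^(2*k) * ‖(P n).coeff k‖^2 ≤ R^(2*m) := by
                calc R^(2*k) * ‖(P n).coeff k‖^2
                    ≤ R^(2*k) * 1 := mul_le_mul_of_nonneg_left e2 (pow_nonneg hRpos.le _)
                  _ = R^(2*k) := mul_one _
                  _ ≤ R^(2*m) := e1
              have e7 : R^(2*m) ≤ C0^2 * R^(2*m) :=
                le_mul_of_one_le_left (pow_nonneg hRpos.le _) (one_le_pow₀ hC01)
              exact e6.trans e7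
            · have hkr : (1-γ0)*(n:ℝ) ≤ (k:ℝ) := by
                refine le_trans (Nat.le_ceil _) ?_
                exact_mod_cast hmk
              have hck := hb2 k hkr hk
              have e2 : ‖(P n).coeff k‖^2 ≤ (c^k)^2 := by
                nlinarith [norm_nonneg ((P n).coeff k), pow_nonneg hc0.le k]
              have e3 : R^(2*k) * (c^k)^2 = 1 := by
                have e4 : R^(2*k) * (c^k)^2 = (c*R)^(2*k) := by ring
                rw [e4, hcR, one_pow]
              have e5 : R^(2*k) * ‖(P n).coeff k‖^2 ≤ 1 := by
                calc R^(2*k) * ‖(P n).coeff k‖^2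
                    ≤ R^(2*k) * (c^k)^2 := mul_le_mul_of_nonneg_left e2 (by positivity)
                  _ = 1 := e3
              calc R^(2*k) * ‖(P n).coeff k‖^2 ≤ 1 := e5
                _ ≤ C0^2 * R^(2*m) := by nlinarith
        calc ∑ k ∈ Finset.range (n+1), R^(2*k) * Complex.normSq ((P n).coeff k)
            ≤ (Finset.range (n+1)).card • (C0^2 * R^(2*m)) :=
              Finset.sum_le_card_nsmul _ _ _ hterm
          _ = ((n:ℝ)+1) * (C0^2 * R^(2*m)) := by
              rw [Finset.card_range, nsmul_eq_mul]; push_cast; ring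
      have hchain : a0^2 * (R/r)^(2*N) ≤ ((n:ℝ)+1) * (C0^2 * R^(2*m)) :=
        le_trans hzb hsum
      -- N is small
      have hNle : (N:ℝ) ≤ (1 - γ0/4) * (n:ℝ) := by
        by_contra hcon
        push_neg at hcon
        have hkey : r^n * R^(2*m) ≤ (R/r)^(2*N) := by
          have hRr : R / r = R ^ ((1 : ℝ) - γ0/2) := by
            rw [Real.rpow_sub hRpos, Real.rpow_one, hrdef]
          rw [hRr, hrdef,
            ← Real.rpow_natCast (R ^ (γ0/2 : ℝ)) n,
            ← Real.rpow_natCast (R ^ ((1:ℝ) - γ0/2)) (2*N),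
            ← Real.rpow_natCast R (2*m),
            ← Real.rpow_mul hRpos.le, ← Real.rpow_mul hRpos.le,
            ← Real.rpow_add hRpos]
          apply (Real.rpow_le_rpow_left_iff hR1).mpr
          push_cast
          have hγn : 8 ≤ γ0^2 * (n:ℝ) := by
            rw [div_le_iff₀ (by positivity)] at h8n
            linarith
          nlinarith [hcon, hmle, hγn, hγ0pos, hγ0lt1, hnpos]
        have h1 : a0^2 * (r^n * R^(2*m)) ≤ ((n:ℝ)+1) * (C0^2 * R^(2*m)) :=
          le_trans (mul_le_mul_of_nonneg_left hkey (by positivity)) hchain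
        have hRm : (0:ℝ) < R^(2*m) := by positivity
        have h2 : a0^2 * r^n ≤ ((n:ℝ)+1) * C0^2 :=
          le_of_mul_le_mul_right (by nlinarith [h1]) hRm
        nlinarith [hgeo]
      -- conclude
      have : (1/(n:ℝ)) * (N:ℝ) = (N:ℝ) / n := by ring
      rw [this, div_le_iff₀ hnpos]
      linarith
    refine ⟨γ0/4, ⟨by linarith, by linarith⟩, r, hr1, ?_⟩
    apply Filter.liminf_le_of_frequently_le'
    exact hfreqle.mono (fun n hn => by exact_mod_cast hn)
  refine ⟨main, ?_⟩
  obtain ⟨γ, ⟨hγ1, hγ2⟩, r, hr1, hliminf⟩ := main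
  intro Hweak
  have hr0 : (0:ℝ) < r - 1 := by linarith
  set h : ℂ → ℝ := fun z => max 0 (min 1 ((r - ‖z‖)/(r-1))) with hhdef
  have hcont : Continuous h := by
    apply continuous_const.max
    apply continuous_const.min
    exact (continuous_const.sub continuous_norm).div_const _
  have hzero : ∀ z : ℂ, r ≤ ‖z‖ → h z = 0 := by
    intro z hz
    have ht : (r - ‖z‖)/(r-1) ≤ 0 :=
      div_nonpos_iff.mpr (Or.inr ⟨by linarith, by linarith⟩)
    have : min 1 ((r - ‖z‖)/(r-1)) ≤ 0 := le_trans (min_le_right _ _) ht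
    exact max_eq_left this
  have hle1 : ∀ z : ℂ, h z ≤ 1 := by
    intro z
    exact max_le (by norm_num) (min_le_left _ _)
  have hnn : ∀ z : ℂ, 0 ≤ h z := fun z => le_max_left _ _
  have hsupp : HasCompactSupport h := by
    apply HasCompactSupport.intro (isCompact_closedBall (0:ℂ) r)
    intro z hz
    apply hzero
    have : ¬ dist z 0 ≤ r := fun hc => hz (Metric.mem_closedBall.mpr hc)
    rw [Complex.dist_eq, sub_zero] at this
    linarith [not_le.mp this]
  have hone : ∀ θ : ℝ, h (Complex.exp ((θ:ℂ) * Complex.I)) = 1 := by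
    intro θ
    have habs : ‖Complex.exp ((θ:ℂ) * Complex.I)‖ = 1 :=
      Complex.norm_exp_ofReal_mul_I θ
    rw [hhdef]
    simp only [habs]
    rw [div_self hr0.ne', min_self]
    exact max_eq_right zero_le_one
  have hint : (∫ θ in (0:ℝ)..(2*Real.pi), h (Complex.exp ((θ:ℝ) * Complex.I))) = 2*Real.pi := by
    rw [intervalIntegral.integral_congr (g := fun _ => (1:ℝ)) (fun θ _ => hone θ)]
    simp
  have H := Hweak h hcont hsupp
  rw [hint] at H
  have hval : (1/(2*Real.pi)) * (2*Real.pi) = 1 := by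
    field_simp
  rw [hval] at H
  -- pointwise comparison
  have hle : ∀ n : ℕ, (1/(n:ℝ)) * ((P n).roots.map h).sum
      ≤ (1/(n:ℝ)) * (((P n).roots.filter fun w => ‖w‖ < r).card : ℝ) := by
    intro n
    apply mul_le_mul_of_nonneg_left _ (by positivity)
    have hsplit : ((P n).roots.filter fun w => ‖w‖ < r)
        + ((P n).roots.filter fun w => ¬ ‖w‖ < r) = (P n).roots :=
      Multiset.filter_add_not _ _
    calc ((P n).roots.map h).sum
        = (((P n).roots.filter fun w => ‖w‖ < r).map h).sum
          + (((P n).roots.filter fun w => ¬ ‖w‖ < r).map h).sum := by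
          conv_lhs => rw [← hsplit]
          rw [Multiset.map_add, Multiset.sum_add]
      _ ≤ (((P n).roots.filter fun w => ‖w‖ < r).card : ℝ) + 0 := by
          apply add_le_add
          · calc (((P n).roots.filter fun w => ‖w‖ < r).map h).sum
                ≤ (((P n).roots.filter fun w => ‖w‖ < r).map fun _ => (1:ℝ)).sum :=
                  Multiset.sum_map_le_sum_map _ _ (fun w _ => hle1 w)
              _ = (((P n).roots.filter fun w => ‖w‖ < r).card : ℝ) := by
                  rw [Multiset.map_const', Multiset.sum_replicate, nsmul_eq_mul, mul_one]
          · apply le_of_eq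
            apply Multiset.sum_eq_zero
            intro x hx
            rcases Multiset.mem_map.mp hx with ⟨w, hw, hwx⟩
            rw [← hwx]
            exact hzero w (not_lt.mp (Multiset.mem_filter.mp hw).2)
      _ = (((P n).roots.filter fun w => ‖w‖ < r).card : ℝ) := add_zero _
  -- liminf comparison
  have hlim1 : Filter.Tendsto
      (fun n : ℕ => (((1/(n:ℝ)) * ((P n).roots.map h).sum : ℝ) : EReal)) atTop
      (nhds (((1:ℝ) : EReal))) := by
    rw [EReal.tendsto_coe (f := atTop) (m := fun n : ℕ => (1/(n:ℝ)) * ((P n).roots.map h).sum)]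
    exact H
  have heq1 : Filter.liminf
      (fun n : ℕ => (((1/(n:ℝ)) * ((P n).roots.map h).sum : ℝ) : EReal)) atTop
      = (((1:ℝ)) : EReal) := hlim1.liminf_eq
  have hmono : Filter.liminf
      (fun n : ℕ => (((1/(n:ℝ)) * ((P n).roots.map h).sum : ℝ) : EReal)) atTop
      ≤ Filter.liminf (fun n : ℕ =>
          (((1 / (n : ℝ)) *
            (((P n).roots.filter fun w => ‖w‖ < r).card : ℝ) : ℝ) : EReal)) atTop := by
    exact Filter.liminf_le_liminf
      (Filter.Eventually.of_forall fun n => by exact_mod_cast hle n)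
  have hfinal : (((1:ℝ)) : EReal) ≤ ((1 - γ : ℝ) : EReal) := by
    rw [← heq1]
    exact le_trans hmono hliminf
  have : (1:ℝ) ≤ 1 - γ := by exact_mod_cast hfinal
  linarith
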